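/- Let G be a weighted bipartite graph between finite vertex sets V and W, let 𝒮 be a partition of V and 𝒯 a partition of W into nonempty parts, and let R ⊆ 𝒮 × 𝒯. Suppose that for each pair (S,T) ∈ R we are given subsets S_T^0, S_T^1 ⊆ S and T_S^0, T_S^1 ⊆ T with S_T^1, T_S^1 nonempty and |S_T^0||T_S^0| ≤ |S_T^1||T_S^1|. Then Σ_{S ∈ 𝒮, T ∈ 𝒯} irreg_G(S,T) ≥ (1/2)·Σ_{(S,T) ∈ R} |e_G(S_T^0, T_S^0) − (|S_T^0||T_S^0|/(|S_T^1||T_S^1|))·e_G(S_T^1, T_S^1)|. -/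

import Mathlib

open Finset

/-- The sum of weights over ordered pairs in `A × B` in a weighted graph `w`. -/
def weightSum {V : Type*} (w : V → V → ℝ) (A B : Finset V) : ℝ :=
  ∑ x ∈ A, ∑ y ∈ B, w x y

/-- The weighted edge density between `X` and `Y`. -/
noncomputable def wDensity {V : Type*} (w : V → V → ℝ) (X Y : Finset V) : ℝ :=
  weightSum w X Y / ((X.card : ℝ) * (Y.card : ℝ))

/-- The irregularity of the pair `X, Y` in a weighted graph `w`. -/
noncomputable def wIrregPair {V : Type*} [DecidableEq V] (w : V → V → ℝ)
    (X Y : Finset V) : ℝ :=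
  (X.powerset ×ˢ Y.powerset).sup'
    ⟨(∅, ∅), by simp⟩
    (fun UW => |weightSum w UW.1 UW.2 - (UW.1.card : ℝ) * (UW.2.card : ℝ) * wDensity w X Y|)

/-- The irregularity of a vertex partition in a weighted graph `w`. -/
noncomputable def wIrregPartition {V : Type*} [DecidableEq V] (w : V → V → ℝ)
    (P : Finset (Finset V)) : ℝ :=
  ∑ X ∈ P, ∑ Y ∈ P, wIrregPair w X Y

/-- `P` is a partition of the vertex set into nonempty parts. -/
def IsPartition {V : Type*} [Fintype V] [DecidableEq V] (P : Finset (Finset V)) : Prop :=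
  (∀ p ∈ P, p.Nonempty) ∧ (∀ p ∈ P, ∀ q ∈ P, p ≠ q → Disjoint p q) ∧
    P.biUnion id = Finset.univ

/-- `P` is a partition of the finite vertex set `A` into nonempty parts. -/
def IsPartitionOn {V : Type*} [DecidableEq V] (A : Finset V) (P : Finset (Finset V)) : Prop :=
  (∀ p ∈ P, p.Nonempty) ∧ (∀ p ∈ P, ∀ q ∈ P, p ≠ q → Disjoint p q) ∧
    P.biUnion id = A


lemma abs_le_wIrregPair {V : Type*} [DecidableEq V] (w : V → V → ℝ)
    {X Y A B : Finset V} (hA : A ⊆ X) (hB : B ⊆ Y) :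
    |weightSum w A B - (A.card : ℝ) * (B.card : ℝ) * wDensity w X Y| ≤ wIrregPair w X Y := by
  have hm : (A, B) ∈ X.powerset ×ˢ Y.powerset := by
    simp [Finset.mem_product, Finset.mem_powerset, hA, hB]
  exact Finset.le_sup' (fun UW => |weightSum w UW.1 UW.2 -
    (UW.1.card : ℝ) * (UW.2.card : ℝ) * wDensity w X Y|) hm

lemma wIrregPair_nonneg {V : Type*} [DecidableEq V] (w : V → V → ℝ)
    (X Y : Finset V) : 0 ≤ wIrregPair w X Y := by
  have := abs_le_wIrregPair w (X := X) (Y := Y) (A := ∅) (B := ∅) (empty_subset _) (empty_subset _)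
  simpa [weightSum] using le_trans (abs_nonneg _) this

/-- Collecting discrepancies over a family `R` of pairs of parts bounds the total
irregularity between partitions `𝒮` of `V` and `𝒯` of `W` of a bipartite weighted
graph from below. -/
theorem irreg_between_partitions_ge {U : Type*} [Fintype U] [DecidableEq U]
    (w : U → U → ℝ) (hsymm : ∀ x y, w x y = w y x) (h0 : ∀ x y, 0 ≤ w x y)
    (h1 : ∀ x y, w x y ≤ 1)
    (V W : Finset U) (hdisj : Disjoint V W) (hcover : V ∪ W = Finset.univ)
    (hbip : ∀ x y, (x ∈ V ∧ y ∈ V) ∨ (x ∈ W ∧ y ∈ W) → w x y = 0)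
    (𝒮 𝒯 : Finset (Finset U)) (h𝒮 : IsPartitionOn V 𝒮) (h𝒯 : IsPartitionOn W 𝒯)
    (R : Finset (Finset U × Finset U)) (hR : R ⊆ 𝒮 ×ˢ 𝒯)
    (S0 S1 T0 T1 : Finset U × Finset U → Finset U)
    (hS0 : ∀ p ∈ R, S0 p ⊆ p.1) (hS1 : ∀ p ∈ R, S1 p ⊆ p.1)
    (hT0 : ∀ p ∈ R, T0 p ⊆ p.2) (hT1 : ∀ p ∈ R, T1 p ⊆ p.2)
    (hS1ne : ∀ p ∈ R, (S1 p).Nonempty) (hT1ne : ∀ p ∈ R, (T1 p).Nonempty)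
    (hcard : ∀ p ∈ R, (S0 p).card * (T0 p).card ≤ (S1 p).card * (T1 p).card) :
    (1 / 2) * ∑ p ∈ R, |weightSum w (S0 p) (T0 p) -
        (((S0 p).card : ℝ) * ((T0 p).card : ℝ)) /
            (((S1 p).card : ℝ) * ((T1 p).card : ℝ)) * weightSum w (S1 p) (T1 p)| ≤
      ∑ S ∈ 𝒮, ∑ T ∈ 𝒯, wIrregPair w S T := by
  have key : ∀ p ∈ R, |weightSum w (S0 p) (T0 p) -
        (((S0 p).card : ℝ) * ((T0 p).card : ℝ)) /
            (((S1 p).card : ℝ) * ((T1 p).card : ℝ)) * weightSum w (S1 p) (T1 p)|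
      ≤ 2 * wIrregPair w p.1 p.2 := by
    intro p hp
    set c : ℝ := (((S0 p).card : ℝ) * ((T0 p).card : ℝ)) /
            (((S1 p).card : ℝ) * ((T1 p).card : ℝ)) with hc
    have ha1 : (0:ℝ) < ((S1 p).card : ℝ) * ((T1 p).card : ℝ) := by
      have := (hS1ne p hp).card_pos
      have := (hT1ne p hp).card_pos
      positivity
    have hc0 : 0 ≤ c := by positivity
    have hc1 : c ≤ 1 := by
      rw [hc, div_le_one ha1]
      exact_mod_cast hcard p hp
    have hce : c * (((S1 p).card : ℝ) * ((T1 p).card : ℝ))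
        = ((S0 p).card : ℝ) * ((T0 p).card : ℝ) := by
      rw [hc]; exact div_mul_cancel₀ _ ha1.ne'
    have h0' := abs_le_wIrregPair w (hS0 p hp) (hT0 p hp)
    have h1' := abs_le_wIrregPair w (hS1 p hp) (hT1 p hp)
    have hI := wIrregPair_nonneg w p.1 p.2
    calc |weightSum w (S0 p) (T0 p) - c * weightSum w (S1 p) (T1 p)|
        = |(weightSum w (S0 p) (T0 p)
              - ((S0 p).card : ℝ) * ((T0 p).card : ℝ) * wDensity w p.1 p.2)
            - c * (weightSum w (S1 p) (T1 p)
              - ((S1 p).card : ℝ) * ((T1 p).card : ℝ) * wDensity w p.1 p.2)| := by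
          congr 1
          linear_combination (-(wDensity w p.1 p.2)) * hce
      _ ≤ |weightSum w (S0 p) (T0 p)
              - ((S0 p).card : ℝ) * ((T0 p).card : ℝ) * wDensity w p.1 p.2|
            + |c * (weightSum w (S1 p) (T1 p)
              - ((S1 p).card : ℝ) * ((T1 p).card : ℝ) * wDensity w p.1 p.2)| :=
          abs_sub _ _
      _ ≤ wIrregPair w p.1 p.2 + 1 * wIrregPair w p.1 p.2 := by
          gcongr
          rw [abs_mul, abs_of_nonneg hc0]
          exact mul_le_mul hc1 h1' (abs_nonneg _) zero_le_one
      _ = 2 * wIrregPair w p.1 p.2 := by ring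
  have step1 : ∑ p ∈ R, |weightSum w (S0 p) (T0 p) -
        (((S0 p).card : ℝ) * ((T0 p).card : ℝ)) /
            (((S1 p).card : ℝ) * ((T1 p).card : ℝ)) * weightSum w (S1 p) (T1 p)|
      ≤ ∑ p ∈ R, 2 * wIrregPair w p.1 p.2 := Finset.sum_le_sum key
  have step2 : ∑ p ∈ R, 2 * wIrregPair w p.1 p.2
      ≤ ∑ p ∈ 𝒮 ×ˢ 𝒯, 2 * wIrregPair w p.1 p.2 := by
    refine Finset.sum_le_sum_of_subset_of_nonneg hR ?_
    intro p _ _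
    have := wIrregPair_nonneg w p.1 p.2
    linarith
  have step3 : ∑ p ∈ 𝒮 ×ˢ 𝒯, 2 * wIrregPair w p.1 p.2
      = 2 * ∑ S ∈ 𝒮, ∑ T ∈ 𝒯, wIrregPair w S T := by
    rw [Finset.sum_product, Finset.mul_sum]
    simp [Finset.mul_sum]
  linarith
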